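/- Suppose X is partitioned into pairwise disjoint sets H̃, L̃, Ũ with H̃ ∪ L̃ ∪ Ũ = X such that pH(x) = r^max(x) for all x ∈ H̃, pL(x) = r^max(x) for all x ∈ L̃, pU(x) = r^max(x) for all x ∈ Ũ, and X is nonempty. Then with probability at least 1 − Σ_{x ∈ X} r^min(x) over ω, the following holds: for every pred : X → Bool with pred x = true for all x ∈ H̃ and pred x = false for all x ∈ L̃, the accuracy satisfies (TP + TN) / (TP + TN + FP + FN) ≥ (|H̃| + |L̃|) / (|H̃| + |L̃| + |Ũ|). -/

import Mathlib

open MeasureTheory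

lemma ncard_filter_aux {X : Type*} [Fintype X] (P : X → Prop) [DecidablePred P] :
    ({x | P x} : Set X).ncard = (Finset.univ.filter P).card := by
  rw [Set.ncard_eq_toFinset_card', Set.toFinset_setOf]

theorem stmt_7
    {Ω : Type*} [MeasurableSpace Ω] (μ : Measure Ω) [IsProbabilityMeasure μ]
    {X : Type*} [Fintype X] [DecidableEq X]
    (θ ε : ℝ) (hε : 0 < ε)
    (F : X → Ω → ℝ) (hF : ∀ x, Measurable (F x))
    (pH pL pU rmin rmax : X → ℝ)
    (hpH : ∀ x, pH x = (μ {ω | θ < F x ω}).toReal)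
    (hpL : ∀ x, pL x = (μ {ω | F x ω ≤ θ}).toReal)
    (hpU : ∀ x, pU x = (μ {ω | θ - ε / 2 < F x ω ∧ F x ω ≤ θ + ε / 2}).toReal)
    (hrmin : ∀ x, rmin x = min (pH x) (min (pL x) (1 - pU x)))
    (hrmax : ∀ x, rmax x = max (pH x) (max (pL x) (pU x)))
    (H L U : Finset X)
    (hHL : Disjoint H L) (hHU : Disjoint H U) (hLU : Disjoint L U)
    (hunion : H ∪ L ∪ U = Finset.univ)
    (hH : ∀ x ∈ H, pH x = rmax x)
    (hL : ∀ x ∈ L, pL x = rmax x)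
    (hU : ∀ x ∈ U, pU x = rmax x)
    (hne : Finset.univ.Nonempty (α := X)) :
    1 - ∑ x, rmin x ≤
      (μ {ω | ∀ pred : X → Bool,
          (∀ x ∈ H, pred x = true) → (∀ x ∈ L, pred x = false) →
          ((H.card : ℝ) + (L.card : ℝ)) / ((H.card : ℝ) + (L.card : ℝ) + (U.card : ℝ)) ≤ ((({x | pred x = true ∧ θ < F x ω}.ncard : ℝ)) + (({x | pred x = false ∧ F x ω ≤ θ}.ncard : ℝ))) / ((({x | pred x = true ∧ θ < F x ω}.ncard : ℝ)) + (({x | pred x = false ∧ F x ω ≤ θ}.ncard : ℝ)) + (({x | pred x = true ∧ F x ω ≤ θ}.ncard : ℝ)) + (({x | pred x = false ∧ θ < F x ω}.ncard : ℝ)))}).toReal := by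
  classical
  set T : Set Ω := {ω | ∀ pred : X → Bool,
          (∀ x ∈ H, pred x = true) → (∀ x ∈ L, pred x = false) →
          ((H.card : ℝ) + (L.card : ℝ)) / ((H.card : ℝ) + (L.card : ℝ) + (U.card : ℝ)) ≤ ((({x | pred x = true ∧ θ < F x ω}.ncard : ℝ)) + (({x | pred x = false ∧ F x ω ≤ θ}.ncard : ℝ))) / ((({x | pred x = true ∧ θ < F x ω}.ncard : ℝ)) + (({x | pred x = false ∧ F x ω ≤ θ}.ncard : ℝ)) + (({x | pred x = true ∧ F x ω ≤ θ}.ncard : ℝ)) + (({x | pred x = false ∧ θ < F x ω}.ncard : ℝ)))} with hT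
  set G : Set Ω := {ω | (∀ x ∈ H, θ < F x ω) ∧ (∀ x ∈ L, F x ω ≤ θ)} with hG
  have hmeasH : ∀ x : X, MeasurableSet {ω | θ < F x ω} :=
    fun x => measurableSet_lt measurable_const (hF x)
  have hmeasL : ∀ x : X, MeasurableSet {ω | F x ω ≤ θ} :=
    fun x => measurableSet_le (hF x) measurable_const
  have hGm : MeasurableSet G := by
    have : G = (⋂ x ∈ H, {ω | θ < F x ω}) ∩ ⋂ x ∈ L, {ω | F x ω ≤ θ} := by
      ext ω
      simp [hG, Set.mem_iInter]
    rw [this]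
    exact (MeasurableSet.biInter H.countable_toSet fun x _ => hmeasH x).inter
      (MeasurableSet.biInter L.countable_toSet fun x _ => hmeasL x)
  -- basic probability facts
  have hsum1 : ∀ x : X, pH x + pL x = 1 := by
    intro x
    have hcompl : {ω | θ < F x ω} = {ω | F x ω ≤ θ}ᶜ := by
      ext ω; simp [not_le]
    have := measure_add_measure_compl (μ := μ) (hmeasL x)
    rw [hpH x, hpL x, hcompl]
    have h1 : (μ {ω | F x ω ≤ θ}).toReal + (μ {ω | F x ω ≤ θ}ᶜ).toReal = 1 := by
      rw [← ENNReal.toReal_add (measure_ne_top μ _) (measure_ne_top μ _), this]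
      simp
    linarith
  have hpHnn : ∀ x : X, 0 ≤ pH x := fun x => by rw [hpH x]; exact ENNReal.toReal_nonneg
  have hpLnn : ∀ x : X, 0 ≤ pL x := fun x => by rw [hpL x]; exact ENNReal.toReal_nonneg
  have hpUle1 : ∀ x : X, pU x ≤ 1 := by
    intro x
    rw [hpU x]
    exact ENNReal.toReal_le_of_le_ofReal one_pos.le (by simpa using prob_le_one)
  -- rmin values
  have hrminH : ∀ x ∈ H, rmin x = pL x := by
    intro x hx
    have hmax := hH x hx
    rw [hrmax x] at hmax
    have h1 : pL x ≤ pH x :=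
      le_trans (le_trans (le_max_left (pL x) (pU x)) (le_max_right (pH x) _)) hmax.ge
    have h2 : pU x ≤ pH x :=
      le_trans (le_trans (le_max_right (pL x) (pU x)) (le_max_right (pH x) _)) hmax.ge
    have h3 : pL x ≤ 1 - pU x := by
      have := hsum1 x
      linarith
    rw [hrmin x, min_eq_left h3, min_eq_right h1]
  have hrminL : ∀ x ∈ L, rmin x = pH x := by
    intro x hx
    have hmax := hL x hx
    rw [hrmax x] at hmax
    have h1 : pH x ≤ pL x := le_trans (le_max_left _ _) hmax.ge
    have h2 : pU x ≤ pL x := le_trans (le_trans (le_max_right _ _) (le_max_right (pH x) _)) hmax.ge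
    have h3 : pH x ≤ 1 - pU x := by
      have := hsum1 x
      linarith
    rw [hrmin x, min_eq_left (le_min h1 h3)]
  have hrminU : ∀ x : X, 0 ≤ rmin x := by
    intro x
    rw [hrmin x]
    exact le_min (hpHnn x) (le_min (hpLnn x) (by linarith [hpUle1 x]))
  -- measure of complement of G
  have hbadsub : Gᶜ ⊆ (⋃ x ∈ H, {ω | F x ω ≤ θ}) ∪ ⋃ x ∈ L, {ω | θ < F x ω} := by
    intro ω hω
    simp only [hG, Set.mem_compl_iff, Set.mem_setOf_eq, not_and_or, not_forall, not_lt, not_le] at hω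
    rcases hω with ⟨x, hx, h⟩ | ⟨x, hx, h⟩
    · exact Set.mem_union_left _ (Set.mem_biUnion hx h)
    · exact Set.mem_union_right _ (Set.mem_biUnion hx h)
  have hbad : μ Gᶜ ≤ ∑ x ∈ H, μ {ω | F x ω ≤ θ} + ∑ x ∈ L, μ {ω | θ < F x ω} := by
    refine le_trans (measure_mono hbadsub) ?_
    refine le_trans (measure_union_le _ _) ?_
    exact add_le_add (measure_biUnion_finset_le _ _) (measure_biUnion_finset_le _ _)
  have hbadR : (μ Gᶜ).toReal ≤ ∑ x ∈ H, pL x + ∑ x ∈ L, pH x := by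
    have hfin : (∑ x ∈ H, μ {ω | F x ω ≤ θ} + ∑ x ∈ L, μ {ω | θ < F x ω}) ≠ ⊤ := by
      refine ENNReal.add_ne_top.2 ⟨?_, ?_⟩ <;>
        exact (ENNReal.sum_lt_top.2 fun x _ => measure_lt_top μ _).ne
    refine le_trans (ENNReal.toReal_mono hfin hbad) ?_
    rw [ENNReal.toReal_add ((ENNReal.sum_lt_top.2 fun x _ => measure_lt_top μ _).ne)
        ((ENNReal.sum_lt_top.2 fun x _ => measure_lt_top μ _).ne),
      ENNReal.toReal_sum (fun x _ => measure_ne_top μ _),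
      ENNReal.toReal_sum (fun x _ => measure_ne_top μ _)]
    apply le_of_eq
    congr 1
    · exact Finset.sum_congr rfl fun x hx => (hpL x).symm
    · exact Finset.sum_congr rfl fun x hx => (hpH x).symm
  -- sum of rmin bound
  have hHLU : Disjoint (H ∪ L) U := Finset.disjoint_union_left.2 ⟨hHU, hLU⟩
  have hsumrmin : ∑ x ∈ H, pL x + ∑ x ∈ L, pH x ≤ ∑ x, rmin x := by
    have : ∑ x, rmin x = ∑ x ∈ H, rmin x + ∑ x ∈ L, rmin x + ∑ x ∈ U, rmin x := by
      rw [← hunion, Finset.sum_union hHLU, Finset.sum_union hHL]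
    rw [this, Finset.sum_congr rfl hrminH, Finset.sum_congr rfl hrminL]
    have : 0 ≤ ∑ x ∈ U, rmin x := Finset.sum_nonneg fun x _ => hrminU x
    linarith
  -- lower bound on μ G
  have hGlb : 1 - ∑ x, rmin x ≤ (μ G).toReal := by
    have h1 : (μ G).toReal + (μ Gᶜ).toReal = 1 := by
      rw [← ENNReal.toReal_add (measure_ne_top μ _) (measure_ne_top μ _),
        measure_add_measure_compl hGm]
      simp
    linarith
  -- G ⊆ T
  have hGT : G ⊆ T := by
    intro ω hω
    obtain ⟨hωH, hωL⟩ := hω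
    intro pred hpredH hpredL
    -- finset versions
    have hnA : ({x | pred x = true ∧ θ < F x ω} : Set X).ncard
        = (Finset.univ.filter fun x => pred x = true ∧ θ < F x ω).card := ncard_filter_aux _
    have hnB : ({x | pred x = false ∧ F x ω ≤ θ} : Set X).ncard
        = (Finset.univ.filter fun x => pred x = false ∧ F x ω ≤ θ).card := ncard_filter_aux _
    have hnC : ({x | pred x = true ∧ F x ω ≤ θ} : Set X).ncard
        = (Finset.univ.filter fun x => pred x = true ∧ F x ω ≤ θ).card := ncard_filter_aux _
    have hnD : ({x | pred x = false ∧ θ < F x ω} : Set X).ncard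
        = (Finset.univ.filter fun x => pred x = false ∧ θ < F x ω).card := ncard_filter_aux _
    set a := Finset.univ.filter fun x => pred x = true ∧ θ < F x ω with ha
    set b := Finset.univ.filter fun x => pred x = false ∧ F x ω ≤ θ with hb
    set c := Finset.univ.filter fun x => pred x = true ∧ F x ω ≤ θ with hc
    set d := Finset.univ.filter fun x => pred x = false ∧ θ < F x ω with hd
    rw [hnA, hnB, hnC, hnD]
    -- total count
    have hac : a.card + c.card = (Finset.univ.filter fun x => pred x = true).card := by
      have h1 : a = (Finset.univ.filter fun x => pred x = true).filter fun x => θ < F x ω := by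
        rw [Finset.filter_filter]
      have h2 : c = (Finset.univ.filter fun x => pred x = true).filter fun x => ¬ θ < F x ω := by
        rw [Finset.filter_filter]
        simp [not_lt, hc]
      rw [h1, h2]
      exact Finset.card_filter_add_card_filter_not _
    have hdb : d.card + b.card = (Finset.univ.filter fun x => pred x = false).card := by
      have h1 : d = (Finset.univ.filter fun x => pred x = false).filter fun x => θ < F x ω := by
        rw [Finset.filter_filter]
      have h2 : b = (Finset.univ.filter fun x => pred x = false).filter fun x => ¬ θ < F x ω := by
        rw [Finset.filter_filter]
        simp [not_lt, hb]
      rw [h1, h2]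
      exact Finset.card_filter_add_card_filter_not _
    have htot : a.card + b.card + c.card + d.card = Fintype.card X := by
      have h3 : (Finset.univ.filter fun x => pred x = true).card
          + (Finset.univ.filter fun x => pred x = false).card = Fintype.card X := by
        have : (Finset.univ.filter fun x => pred x = false)
            = Finset.univ.filter fun x => ¬ pred x = true := by
          apply Finset.filter_congr
          intro x _
          simp
        rw [this, Finset.card_filter_add_card_filter_not, Finset.card_univ]
      omega
    have hcardX : H.card + L.card + U.card = Fintype.card X := by
      rw [← Finset.card_univ, ← hunion, Finset.card_union_of_disjoint hHLU,
        Finset.card_union_of_disjoint hHL]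
    -- H ⊆ a, L ⊆ b
    have hHa : H ⊆ a := by
      intro x hx
      simp only [ha, Finset.mem_filter, Finset.mem_univ, true_and]
      exact ⟨hpredH x hx, hωH x hx⟩
    have hLb : L ⊆ b := by
      intro x hx
      simp only [hb, Finset.mem_filter, Finset.mem_univ, true_and]
      exact ⟨hpredL x hx, hωL x hx⟩
    have hab : Disjoint a b := by
      rw [Finset.disjoint_left]
      intro x hx hx'
      simp only [ha, hb, Finset.mem_filter] at hx hx'
      rw [hx.2.1] at hx'
      simp at hx'
    have hcount : H.card + L.card ≤ a.card + b.card := by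
      calc H.card + L.card = (H ∪ L).card := (Finset.card_union_of_disjoint hHL).symm
        _ ≤ (a ∪ b).card := Finset.card_le_card (Finset.union_subset_union hHa hLb)
        _ = a.card + b.card := Finset.card_union_of_disjoint hab
    -- final arithmetic
    have hden : (a.card : ℝ) + b.card + c.card + d.card
        = (H.card : ℝ) + L.card + U.card := by
      have h1 : a.card + b.card + c.card + d.card = H.card + L.card + U.card := by omega
      exact_mod_cast h1
    rw [hden]
    have hpos : (0 : ℝ) < (H.card : ℝ) + L.card + U.card := by
      have : 0 < Fintype.card X := Fintype.card_pos_iff.2 ⟨hne.choose⟩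
      have := hcardX
      push_cast [← this]
      exact_mod_cast by omega
    rw [div_le_div_iff₀ hpos hpos]
    have : (H.card : ℝ) + L.card ≤ (a.card : ℝ) + b.card := by exact_mod_cast hcount
    nlinarith
  refine le_trans hGlb ?_
  exact ENNReal.toReal_mono (measure_ne_top μ _) (measure_mono hGT)
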